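/- For n > 6: if there exists a minimal pancyclic graph on n vertices containing an arc of its Hamiltonian cycle of length at least (n−1)/2 with no chord joining the arc's endpoints, then m(n−1) < m(n); and if there exists a minimal pancyclic graph on n vertices containing an arc of length at least (n+2)/3 whose endpoints are joined by a chord, then m(n−1) ≤ m(n). -/

import Mathlib

open SimpleGraph

/-- `G` has a cycle of length `k`. -/
def HasCycleLength {V : Type*} (G : SimpleGraph V) (k : ℕ) : Prop :=
  ∃ (v : V) (w : G.Walk v v), w.IsCycle ∧ w.length = k

/-- A graph on a finite vertex type is pancyclic if it has a cycle of every
length `k` with `3 ≤ k ≤ n`, where `n` is the number of vertices. -/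
def Pancyclic {V : Type*} [Fintype V] (G : SimpleGraph V) : Prop :=
  ∀ k : ℕ, 3 ≤ k → k ≤ Fintype.card V → HasCycleLength G k

/-- `m n` is the minimum number of edges of a pancyclic graph on `n` vertices. -/
noncomputable def m (n : ℕ) : ℕ :=
  sInf {e | ∃ G : SimpleGraph (Fin n), Pancyclic G ∧ G.edgeSet.ncard = e}

/-- Contract the edge `{u, v}` of `G`: delete `u` and attach its neighbors to `v`. -/
def contractEdge {V : Type*} (G : SimpleGraph V) (u v : V) :
    SimpleGraph {x : V // x ≠ u} where
  Adj a b := a ≠ b ∧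
    (G.Adj a b ∨ ((a : V) = v ∧ G.Adj u b) ∨ ((b : V) = v ∧ G.Adj a u))
  symm := by
    constructor
    rintro a b ⟨hab, h⟩
    refine ⟨hab.symm, ?_⟩
    rcases h with h | ⟨h1, h2⟩ | ⟨h1, h2⟩
    · exact Or.inl h.symm
    · exact Or.inr (Or.inr ⟨h1, h2.symm⟩)
    · exact Or.inr (Or.inl ⟨h1, h2.symm⟩)
  loopless := ⟨fun a h => h.1 rfl⟩

/-- `a, a+1, …, a+L` is an arc of the standard Hamiltonian cycle `0,1,…,n-1` of
`G` on `ZMod n`: a maximal path of the cycle all of whose interior vertices have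
degree 2 (maximality: the two endpoints have degree greater than 2). -/
def IsArc {n : ℕ} (G : SimpleGraph (ZMod n)) (a : ZMod n) (L : ℕ) : Prop :=
  L < n ∧
  (∀ t : ℕ, 0 < t → t < L → (G.neighborSet (a + (t : ZMod n))).ncard = 2) ∧
  2 < (G.neighborSet a).ncard ∧ 2 < (G.neighborSet (a + (L : ZMod n))).ncard


section Aux10

variable {V : Type*} [DecidableEq V] {G : SimpleGraph V}

lemma mem_tail_of_closed {v : V} {c : G.Walk v v} (hc : ¬c.Nil) {x : V}
    (hx : x ∈ c.support) : x ∈ c.support.tail := by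
  cases c with
  | nil => simp at hc
  | cons h p =>
    rw [Walk.support_cons, List.mem_cons] at hx
    rw [Walk.support_cons, List.tail_cons]
    rcases hx with rfl | hx
    · exact p.end_mem_support
    · exact hx

lemma length_rotate'' {v u : V} (c : G.Walk v v) (h : u ∈ c.support) :
    (c.rotate u h).length = c.length := by
  have h2 := congrArg Walk.length (c.take_spec h)
  rw [Walk.length_append] at h2
  rw [Walk.rotate, Walk.length_append]
  omega

lemma mem_support_rotate_iff' {v u : V} {c : G.Walk v v} (hc : ¬c.Nil) (h : u ∈ c.support) {x : V} :
    x ∈ (c.rotate u h).support ↔ x ∈ c.support := by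
  have hrot : ¬(c.rotate u h).Nil := by
    rw [Walk.not_nil_iff_lt_length, length_rotate'']
    rwa [Walk.not_nil_iff_lt_length] at hc
  have hmem := (Walk.support_rotate c u h).mem_iff (a := x)
  constructor
  · intro hx; exact List.mem_of_mem_tail (hmem.mp (mem_tail_of_closed hrot hx))
  · intro hx; exact List.mem_of_mem_tail (hmem.mpr (mem_tail_of_closed hc hx))

lemma endpoint_edge_not_mem {x y : V} {p : G.Walk x y} (hp : p.IsPath) (hl : 2 ≤ p.length) :
    s(x, y) ∉ p.edges := by
  cases p with
  | nil => simp
  | cons h q =>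
    rw [Walk.cons_isPath_iff] at hp
    intro hmem
    rw [Walk.edges_cons, List.mem_cons] at hmem
    rcases hmem with hmem | hmem
    · rw [Sym2.eq_iff] at hmem
      rcases hmem with ⟨-, hyz⟩ | ⟨hxz, -⟩
      · subst hyz
        cases q with
        | nil => simp at hl
        | cons h' q' =>
          exact ((Walk.cons_isPath_iff _ _).mp hp.1).2 q'.end_mem_support
      · exact h.ne hxz
    · exact hp.2 (q.fst_mem_support_of_mem_edges hmem)

lemma cycle_split {r : V} {D : G.Walk r r} (hD : D.IsCycle) :
    ∃ (z₁ z₂ : V) (q : G.Walk z₁ z₂),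
      z₁ ≠ z₂ ∧ G.Adj r z₁ ∧ G.Adj r z₂ ∧ q.IsPath ∧ r ∉ q.support ∧
      q.length + 2 = D.length ∧
      (∀ x ∈ q.support, x ∈ D.support) ∧
      (∀ x ∈ D.support, x = r ∨ x ∈ q.support) ∧
      (∀ e ∈ q.edges, e ∈ D.edges) := by
  cases D with
  | nil => exact absurd rfl hD.ne_nil
  | cons h w =>
    rename_i z₁
    have hwrev : ¬w.reverse.Nil := (Walk.not_nil_of_ne h.ne)
    obtain ⟨z₂, h₂, q', hq'⟩ := Walk.not_nil_iff.mp hwrev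
    have hwsupnodup : w.support.Nodup := by
      have h3 := hD.support_nodup
      simpa using h3
    have hrevsup : w.support.reverse = r :: q'.support := by
      rw [← Walk.support_reverse, hq', Walk.support_cons]
    have hcn : (r :: q'.support).Nodup := hrevsup ▸ (List.nodup_reverse.mpr hwsupnodup)
    have hq'nodup : q'.support.Nodup := hcn.of_cons
    have hrq' : r ∉ q'.support := (List.nodup_cons.mp hcn).1
    have hmemw : ∀ x ∈ q'.support, x ∈ w.support := by
      intro x hx
      have : x ∈ w.support.reverse := by rw [hrevsup]; exact List.mem_cons_of_mem _ hx
      exact List.mem_reverse.mp this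
    have hq'edges : ∀ e ∈ q'.edges, e ∈ w.edges := by
      intro e he
      have : e ∈ w.reverse.edges := by rw [hq', Walk.edges_cons]; exact List.mem_cons_of_mem _ he
      rw [Walk.edges_reverse, List.mem_reverse] at this
      exact this
    have hz2w : s(r, z₂) ∈ w.edges := by
      have : s(r, z₂) ∈ w.reverse.edges := by rw [hq', Walk.edges_cons]; exact List.mem_cons_self
      rw [Walk.edges_reverse, List.mem_reverse] at this
      exact this
    have hne : z₁ ≠ z₂ := by
      rintro rfl
      have hnd : (Walk.cons h w).edges.Nodup := hD.isCircuit.isTrail.edges_nodup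
      rw [Walk.edges_cons, List.nodup_cons] at hnd
      exact hnd.1 hz2w
    have hlen : q'.length + 2 = (Walk.cons h w).length := by
      have h1 := congrArg Walk.length hq'
      rw [Walk.length_reverse, Walk.length_cons] at h1
      rw [Walk.length_cons]; omega
    refine ⟨z₁, z₂, q'.reverse, hne, h, h₂, ?_, ?_, ?_, ?_, ?_, ?_⟩
    · rw [Walk.isPath_def, Walk.support_reverse]
      exact List.nodup_reverse.mpr hq'nodup
    · rw [Walk.support_reverse, List.mem_reverse]; exact hrq'
    · rw [Walk.length_reverse]; exact hlen
    · intro x hx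
      rw [Walk.support_reverse, List.mem_reverse] at hx
      rw [Walk.support_cons]
      exact List.mem_cons_of_mem _ (hmemw x hx)
    · intro x hx
      rw [Walk.support_cons, List.mem_cons] at hx
      rcases hx with rfl | hx
      · exact Or.inl rfl
      · have : x ∈ w.support.reverse := List.mem_reverse.mpr hx
        rw [hrevsup, List.mem_cons] at this
        rcases this with rfl | hx'
        · exact Or.inl rfl
        · exact Or.inr (by rw [Walk.support_reverse, List.mem_reverse]; exact hx')
    · intro e he
      rw [Walk.edges_reverse, List.mem_reverse] at he
      rw [Walk.edges_cons]
      exact List.mem_cons_of_mem _ (hq'edges e he)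

variable {V : Type*} {G : SimpleGraph V} {u v : V}

def liftWalk :
    {x y : V} → (w : G.Walk x y) → (hw : ∀ z ∈ w.support, z ≠ u) →
      (contractEdge G u v).Walk ⟨x, hw x w.start_mem_support⟩ ⟨y, hw y w.end_mem_support⟩
  | _, _, Walk.nil, _ => Walk.nil
  | _, _, Walk.cons h p, hw =>
      Walk.cons
        (id (And.intro (fun hxy => h.ne (congrArg Subtype.val hxy)) (Or.inl h)))
        (liftWalk p (fun z hz => hw z (by rw [Walk.support_cons]; exact List.mem_cons_of_mem _ hz)))

lemma liftWalk_length :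
    ∀ {x y : V} (w : G.Walk x y) (hw : ∀ z ∈ w.support, z ≠ u),
      (liftWalk (v := v) w hw).length = w.length
  | _, _, Walk.nil, _ => rfl
  | _, _, Walk.cons h p, hw => by
      simp only [liftWalk, Walk.length_cons]
      rw [liftWalk_length p _]

lemma liftWalk_support :
    ∀ {x y : V} (w : G.Walk x y) (hw : ∀ z ∈ w.support, z ≠ u),
      (liftWalk (v := v) w hw).support.map Subtype.val = w.support
  | _, _, Walk.nil, _ => rfl
  | _, _, Walk.cons h p, hw => by
      simp only [liftWalk, Walk.support_cons, List.map_cons]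
      rw [liftWalk_support p _]

lemma liftWalk_edges :
    ∀ {x y : V} (w : G.Walk x y) (hw : ∀ z ∈ w.support, z ≠ u),
      (liftWalk (v := v) w hw).edges.map (Sym2.map Subtype.val) = w.edges
  | _, _, Walk.nil, _ => rfl
  | _, _, Walk.cons h p, hw => by
      simp only [liftWalk, Walk.edges_cons, List.map_cons, Sym2.map_pair_eq]
      rw [liftWalk_edges p _]

lemma liftWalk_isPath {x y : V} {w : G.Walk x y} (hw : ∀ z ∈ w.support, z ≠ u)
    (hp : w.IsPath) : (liftWalk (v := v) w hw).IsPath := by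
  rw [Walk.isPath_def]
  have := hp.support_nodup
  rw [← liftWalk_support (v := v) w hw] at this
  exact this.of_map _

lemma liftWalk_isCycle {x : V} {c : G.Walk x x} (hw : ∀ z ∈ c.support, z ≠ u)
    (hc : c.IsCycle) : (liftWalk (v := v) c hw).IsCycle := by
  rw [Walk.isCycle_def]
  refine ⟨⟨?_⟩, ?_, ?_⟩
  · have := hc.isCircuit.isTrail.edges_nodup
    rw [← liftWalk_edges (v := v) c hw] at this
    exact this.of_map _
  · intro hnil
    have h3 := hc.three_le_length
    have : (liftWalk (v := v) c hw).length = 0 := by rw [hnil]; rfl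
    rw [liftWalk_length] at this
    omega
  · have := hc.support_nodup
    rw [← liftWalk_support (v := v) c hw, ← List.map_tail] at this
    exact this.of_map _

lemma lift_cycle {x : V} {c : G.Walk x x} (hc : c.IsCycle)
    (h : ∀ z ∈ c.support, z ≠ u) :
    ∃ (y : {z : V // z ≠ u}) (w : (contractEdge G u v).Walk y y),
      w.IsCycle ∧ w.length = c.length :=
  ⟨⟨x, h x c.start_mem_support⟩, liftWalk c h, liftWalk_isCycle h hc, liftWalk_length c h⟩

section ZModPart
variable {n : ℕ} [NeZero n] {G : SimpleGraph (ZMod n)} {a : ZMod n} {L : ℕ}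

lemma cast_add_inj {i j : ℕ} (hi : i < n) (hj : j < n)
    (h : a + (i : ZMod n) = a + (j : ZMod n)) : i = j := by
  have h' := add_left_cancel h
  have h2 := congrArg ZMod.val h'
  rwa [ZMod.val_cast_of_lt hi, ZMod.val_cast_of_lt hj] at h2

lemma cast_succ_eq (t : ℕ) : a + (t : ZMod n) + 1 = a + ((t+1 : ℕ) : ZMod n) := by
  push_cast; ring

lemma nbr_interior (ham : ∀ i : ZMod n, G.Adj i (i+1)) (hLn : L < n)
    (hInt : ∀ t : ℕ, 0 < t → t < L → (G.neighborSet (a + (t : ZMod n))).ncard = 2)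
    {t : ℕ} (h0 : 0 < t) (htL : t < L) {z : ZMod n}
    (hz : G.Adj (a + (t : ZMod n)) z) :
    z = a + ((t-1 : ℕ) : ZMod n) ∨ z = a + ((t+1 : ℕ) : ZMod n) := by
  have hset : ({a + ((t-1:ℕ) : ZMod n), a + ((t+1:ℕ) : ZMod n)} : Set (ZMod n))
      = G.neighborSet (a + (t : ZMod n)) := by
    apply Set.eq_of_subset_of_ncard_le
    · intro x hx
      rcases hx with rfl | hx
      · have h1 := ham (a + ((t-1:ℕ) : ZMod n))
        rw [cast_succ_eq, Nat.sub_add_cancel h0] at h1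
        exact h1.symm
      · rcases hx with rfl
        have h1 := ham (a + (t : ZMod n))
        rwa [cast_succ_eq] at h1
    · rw [hInt t h0 htL]
      apply le_of_eq; symm
      apply Set.ncard_pair
      intro hEq
      have h' := cast_add_inj (a := a) (by omega) (by omega) hEq
      omega
    · exact Set.toFinite _
  have hmem : z ∈ G.neighborSet (a + (t : ZMod n)) := hz
  rw [← hset] at hmem
  simpa using hmem

lemma forced_step (ham : ∀ i : ZMod n, G.Adj i (i+1)) (hLn : L < n)
    (hInt : ∀ t : ℕ, 0 < t → t < L → (G.neighborSet (a + (t : ZMod n))).ncard = 2)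
    {x : ZMod n} {c : G.Walk x x} (hc : c.IsCycle)
    {t : ℕ} (h0 : 0 < t) (htL : t < L) (ht : a + (t : ZMod n) ∈ c.support) :
    a + ((t-1 : ℕ) : ZMod n) ∈ c.support ∧ a + ((t+1 : ℕ) : ZMod n) ∈ c.support := by
  classical
  obtain ⟨z₁, z₂, q, hne, h1, h2, -, -, -, hsub, -, -⟩ := cycle_split (hc.rotate ht)
  have hz₁ : z₁ ∈ c.support :=
    (mem_support_rotate_iff' hc.not_nil ht).mp (hsub z₁ q.start_mem_support)
  have hz₂ : z₂ ∈ c.support :=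
    (mem_support_rotate_iff' hc.not_nil ht).mp (hsub z₂ q.end_mem_support)
  have c1 := nbr_interior ham hLn hInt h0 htL h1
  have c2 := nbr_interior ham hLn hInt h0 htL h2
  rcases c1 with rfl | rfl <;> rcases c2 with h' | h'
  · exact absurd h'.symm hne
  · rw [h'] at hz₂; exact ⟨hz₁, hz₂⟩
  · rw [h'] at hz₂; exact ⟨hz₂, hz₁⟩
  · exact absurd h'.symm hne

lemma interior_to_u (ham : ∀ i : ZMod n, G.Adj i (i+1)) (hLn : L < n)
    (hInt : ∀ t : ℕ, 0 < t → t < L → (G.neighborSet (a + (t : ZMod n))).ncard = 2)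
    {x : ZMod n} {c : G.Walk x x} (hc : c.IsCycle) :
    ∀ t : ℕ, 0 < t → t < L → a + (t : ZMod n) ∈ c.support →
      a + ((1:ℕ) : ZMod n) ∈ c.support := by
  intro t
  induction t with
  | zero => omega
  | succ s ih =>
    intro h0 hL hmem
    rcases Nat.eq_zero_or_pos s with rfl | hs
    · exact hmem
    · have hstep := (forced_step ham hLn hInt hc (t := s+1) (by omega) hL hmem).1
      simp only [Nat.add_sub_cancel] at hstep
      exact ih hs (by omega) hstep

lemma u_to_arc (ham : ∀ i : ZMod n, G.Adj i (i+1)) (hLn : L < n)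
    (hInt : ∀ t : ℕ, 0 < t → t < L → (G.neighborSet (a + (t : ZMod n))).ncard = 2)
    (hL2 : 2 ≤ L)
    {x : ZMod n} {c : G.Walk x x} (hc : c.IsCycle)
    (hu : a + ((1:ℕ) : ZMod n) ∈ c.support) :
    ∀ s : ℕ, s ≤ L → a + (s : ZMod n) ∈ c.support := by
  have hup : ∀ s : ℕ, 1 ≤ s → s ≤ L → a + (s : ZMod n) ∈ c.support := by
    intro s h1 h2
    induction s with
    | zero => omega
    | succ sp ih =>
      rcases Nat.eq_zero_or_pos sp with rfl | hsp
      · exact hu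
      · have hmem := ih hsp (by omega)
        exact (forced_step ham hLn hInt hc hsp (by omega) hmem).2
  intro s hs
  rcases Nat.eq_zero_or_pos s with rfl | h1
  · have h := (forced_step ham hLn hInt hc (t := 1) one_pos (by omega) hu).1
    simpa using h
  · exact hup s h1 hs

lemma tail_card_eq_length {x : ZMod n} (c : G.Walk x x) (hc : c.IsCycle) :
    c.support.tail.toFinset.card = c.length := by
  classical
  rw [List.toFinset_card_of_nodup hc.support_nodup, List.length_tail, c.length_support]
  omega

lemma length_lb (hLn : L < n)
    {x : ZMod n} {c : G.Walk x x} (hc : c.IsCycle)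
    (hall : ∀ s : ℕ, s ≤ L → a + (s : ZMod n) ∈ c.support) : L + 1 ≤ c.length := by
  classical
  have hsub : (Finset.range (L+1)).image (fun t : ℕ => a + (t : ZMod n))
      ⊆ c.support.tail.toFinset := by
    intro y hy
    simp only [Finset.mem_image, Finset.mem_range] at hy
    obtain ⟨t, ht, rfl⟩ := hy
    rw [List.mem_toFinset]
    exact mem_tail_of_closed hc.not_nil (hall t (by omega))
  have himg : ((Finset.range (L+1)).image (fun t : ℕ => a + (t : ZMod n))).card = L + 1 := by
    rw [Finset.card_image_of_injOn, Finset.card_range]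
    intro i hi j hj hij
    simp only [Finset.coe_range, Set.mem_Iio] at hi hj
    exact cast_add_inj (by omega) (by omega) hij
  have hle := Finset.card_le_card hsub
  rwa [himg, tail_card_eq_length c hc] at hle

lemma length_ub_avoid (ham : ∀ i : ZMod n, G.Adj i (i+1)) (hLn : L < n)
    (hInt : ∀ t : ℕ, 0 < t → t < L → (G.neighborSet (a + (t : ZMod n))).ncard = 2)
    (hL1 : 1 ≤ L)
    {x : ZMod n} {c : G.Walk x x} (hc : c.IsCycle)
    (havoid : a + ((1:ℕ) : ZMod n) ∉ c.support) : c.length + L ≤ n + 1 := by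
  classical
  have hint : ∀ t : ℕ, 0 < t → t < L → a + (t : ZMod n) ∉ c.support := fun t h0 hL hmem =>
    havoid (interior_to_u ham hLn hInt hc t h0 hL hmem)
  set S := c.support.tail.toFinset with hS
  set I := (Finset.Ioo 0 L).image (fun t : ℕ => a + (t : ZMod n)) with hI
  have hdisj : Disjoint S I := by
    rw [Finset.disjoint_right]
    intro y hyI hyS
    simp only [hI, Finset.mem_image, Finset.mem_Ioo] at hyI
    obtain ⟨t, ⟨h0, hL⟩, rfl⟩ := hyI
    exact hint t h0 hL (List.mem_of_mem_tail (List.mem_toFinset.mp hyS))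
  have hIcard : I.card = L - 1 := by
    have hinj : Set.InjOn (fun t : ℕ => a + (t : ZMod n)) (Finset.Ioo 0 L) := by
      intro i hi j hj hij
      simp only [Finset.coe_Ioo, Set.mem_Ioo] at hi hj
      exact cast_add_inj (by omega) (by omega) hij
    rw [hI, Finset.card_image_of_injOn hinj, Nat.card_Ioo]
    omega
  have hcard := Finset.card_le_univ (S ∪ I)
  rw [Finset.card_union_of_disjoint hdisj] at hcard
  rw [ZMod.card] at hcard
  rw [hIcard, tail_card_eq_length c hc] at hcard
  omega

lemma length_lb_nochord (ham : ∀ i : ZMod n, G.Adj i (i+1)) (hLn : L < n)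
    (hInt : ∀ t : ℕ, 0 < t → t < L → (G.neighborSet (a + (t : ZMod n))).ncard = 2)
    (hL3 : 3 ≤ L) (hnc : ¬ G.Adj a (a + (L : ZMod n)))
    {x : ZMod n} {c : G.Walk x x} (hc : c.IsCycle)
    (hu : a + ((1:ℕ) : ZMod n) ∈ c.support) : L + 2 ≤ c.length := by
  classical
  have hall := u_to_arc ham hLn hInt (by omega) hc hu
  have ha0 : a + ((0:ℕ) : ZMod n) ∈ c.support := hall 0 (by omega)
  obtain ⟨z₁, z₂, q, hne, h1, h2, -, -, -, hsub, -, -⟩ := cycle_split (hc.rotate ha0)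
  have hz₁ : z₁ ∈ c.support :=
    (mem_support_rotate_iff' hc.not_nil ha0).mp (hsub z₁ q.start_mem_support)
  have hz₂ : z₂ ∈ c.support :=
    (mem_support_rotate_iff' hc.not_nil ha0).mp (hsub z₂ q.end_mem_support)
  -- pick x' adjacent to a+0, in support, ≠ a+1
  have hkey : ∃ x' : ZMod n, G.Adj (a + ((0:ℕ) : ZMod n)) x' ∧ x' ∈ c.support ∧
      x' ≠ a + ((1:ℕ) : ZMod n) := by
    by_cases hz : z₁ = a + ((1:ℕ) : ZMod n)
    · exact ⟨z₂, h2, hz₂, fun hz' => hne (hz.trans hz'.symm)⟩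
    · exact ⟨z₁, h1, hz₁, hz⟩
  obtain ⟨x', hxadj, hxsupp, hxne1⟩ := hkey
  have hxarc : ∀ s : ℕ, s ≤ L → x' ≠ a + (s : ZMod n) := by
    intro s hs hx
    subst hx
    rcases Nat.eq_zero_or_pos s with rfl | h1s
    · exact hxadj.ne rfl
    · rcases Nat.lt_or_ge s 2 with h2s | h2s
      · have : s = 1 := by omega
        subst this
        exact hxne1 rfl
      · rcases Nat.eq_or_lt_of_le hs with rfl | hsL
        · -- s = L : chord
          apply hnc
          have := hxadj
          simpa using this
        · -- 2 ≤ s < L : a ∈ N(a+s) impossible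
          have hadj' : G.Adj (a + (s : ZMod n)) (a + ((0:ℕ) : ZMod n)) := hxadj.symm
          rcases nbr_interior ham hLn hInt (by omega) hsL hadj' with h' | h'
          · have := cast_add_inj (a := a) (by omega) (by omega) h'
            omega
          · have := cast_add_inj (a := a) (by omega) (by omega) h'
            omega
  -- now count L+2 vertices
  set T := (Finset.range (L+1)).image (fun t : ℕ => a + (t : ZMod n)) with hT
  have hTsub : T ⊆ c.support.tail.toFinset := by
    intro y hy
    simp only [hT, Finset.mem_image, Finset.mem_range] at hy
    obtain ⟨t, ht, rfl⟩ := hy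
    rw [List.mem_toFinset]
    exact mem_tail_of_closed hc.not_nil (hall t (by omega))
  have hTcard : T.card = L + 1 := by
    rw [hT, Finset.card_image_of_injOn, Finset.card_range]
    intro i hi j hj hij
    simp only [Finset.coe_range, Set.mem_Iio] at hi hj
    exact cast_add_inj (by omega) (by omega) hij
  have hxT : x' ∉ T := by
    intro hx
    simp only [hT, Finset.mem_image, Finset.mem_range] at hx
    obtain ⟨t, ht, hteq⟩ := hx
    exact hxarc t (by omega) hteq.symm
  have hins : insert x' T ⊆ c.support.tail.toFinset := by
    intro y hy
    rcases Finset.mem_insert.mp hy with rfl | hy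
    · rw [List.mem_toFinset]; exact mem_tail_of_closed hc.not_nil hxsupp
    · exact hTsub hy
  have hle := Finset.card_le_card hins
  rw [Finset.card_insert_of_notMem hxT, hTcard, tail_card_eq_length c hc] at hle
  omega

end ZModPart

section ContractPart
variable {n : ℕ} [NeZero n] {G : SimpleGraph (ZMod n)} {a : ZMod n} {L : ℕ}

lemma not_adj_a0_a2 (ham : ∀ i : ZMod n, G.Adj i (i+1)) (hLn : L < n)
    (hInt : ∀ t : ℕ, 0 < t → t < L → (G.neighborSet (a + (t : ZMod n))).ncard = 2)
    (hL3 : 3 ≤ L) : ¬ G.Adj (a + ((0:ℕ) : ZMod n)) (a + ((2:ℕ) : ZMod n)) := by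
  intro h
  rcases nbr_interior ham hLn hInt (t := 2) (by omega) (by omega) h.symm with h' | h'
  · have := cast_add_inj (a := a) (by omega) (by omega) h'
    omega
  · have := cast_add_inj (a := a) (by omega) (by omega) h'
    omega

lemma contract_cycle (ham : ∀ i : ZMod n, G.Adj i (i+1)) (hLn : L < n)
    (hInt : ∀ t : ℕ, 0 < t → t < L → (G.neighborSet (a + (t : ZMod n))).ncard = 2)
    (hL3 : 3 ≤ L) {x : ZMod n} {c : G.Walk x x}
    (hc : c.IsCycle) (hu : a + ((1:ℕ) : ZMod n) ∈ c.support) :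
    ∃ (y : {z : ZMod n // z ≠ a + ((1:ℕ) : ZMod n)})
      (w : (contractEdge G (a + ((1:ℕ) : ZMod n)) (a + ((2:ℕ) : ZMod n))).Walk y y),
      w.IsCycle ∧ w.length + 1 = c.length := by
  classical
  obtain ⟨z₁, z₂, q, hne, h1, h2, hqp, hrq, hlen, -, -, -⟩ := cycle_split (hc.rotate hu)
  rw [length_rotate''] at hlen
  have c1 := nbr_interior ham hLn hInt (t := 1) one_pos (by omega) h1
  have c2 := nbr_interior ham hLn hInt (t := 1) one_pos (by omega) h2
  have e0 : ((1:ℕ) - 1 : ℕ) = 0 := rfl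
  have e2 : ((1:ℕ) + 1 : ℕ) = 2 := rfl
  rw [e0, e2] at c1 c2
  have build : ∀ (p : G.Walk (a + ((0:ℕ) : ZMod n)) (a + ((2:ℕ) : ZMod n))),
      p.IsPath → (a + ((1:ℕ) : ZMod n)) ∉ p.support →
      ∃ (y : {z : ZMod n // z ≠ a + ((1:ℕ) : ZMod n)})
        (w : (contractEdge G (a + ((1:ℕ) : ZMod n)) (a + ((2:ℕ) : ZMod n))).Walk y y),
        w.IsCycle ∧ w.length = p.length + 1 := by
    intro p hp hnu
    have hw : ∀ z ∈ p.support, z ≠ a + ((1:ℕ) : ZMod n) := fun z hz he => hnu (he ▸ hz)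
    have hadj : (contractEdge G (a + ((1:ℕ) : ZMod n)) (a + ((2:ℕ) : ZMod n))).Adj
        ⟨a + ((2:ℕ) : ZMod n), hw _ p.end_mem_support⟩
        ⟨a + ((0:ℕ) : ZMod n), hw _ p.start_mem_support⟩ := by
      refine ⟨?_, Or.inr (Or.inl ⟨rfl, ?_⟩)⟩
      · intro he
        have h' := congrArg Subtype.val he
        have := cast_add_inj (a := a) (by omega) (by omega) h'
        omega
      · have h' := ham (a + ((0:ℕ) : ZMod n))
        rw [cast_succ_eq] at h'
        exact h'.symm
    refine ⟨_, Walk.cons hadj (liftWalk p hw), ?_, ?_⟩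
    · refine (Walk.cons_isCycle_iff _ hadj).mpr ⟨liftWalk_isPath hw hp, ?_⟩
      intro hmem
      have hmap := List.mem_map_of_mem (f := Sym2.map Subtype.val) hmem
      rw [liftWalk_edges, Sym2.map_pair_eq] at hmap
      have hGadj : G.Adj (a + ((2:ℕ) : ZMod n)) (a + ((0:ℕ) : ZMod n)) :=
        p.adj_of_mem_edges hmap
      exact not_adj_a0_a2 ham hLn hInt hL3 hGadj.symm
    · rw [Walk.length_cons, liftWalk_length]
  rcases c1 with rfl | rfl
  · rcases c2 with h' | h'
    · exact absurd h' (by intro h''; exact hne (h''.symm ▸ rfl))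
    · subst h'
      obtain ⟨y, w, hw1, hw2⟩ := build q hqp hrq
      exact ⟨y, w, hw1, by omega⟩
  · rcases c2 with h' | h'
    · subst h'
      obtain ⟨y, w, hw1, hw2⟩ := build q.reverse hqp.reverse
        (by rw [Walk.support_reverse, List.mem_reverse]; exact hrq)
      refine ⟨y, w, hw1, ?_⟩
      rw [Walk.length_reverse] at hw2
      omega
    · exact absurd h' (by intro h''; exact hne (h''.symm ▸ rfl))

lemma asc_walk (ham : ∀ i : ZMod n, G.Adj i (i+1)) (hLn : L < n)
    (hInt : ∀ t : ℕ, 0 < t → t < L → (G.neighborSet (a + (t : ZMod n))).ncard = 2) :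
    ∀ (k j : ℕ), j + k + 1 = L → 1 ≤ j →
    ∀ (P : G.Walk (a + ((j+1 : ℕ) : ZMod n)) (a + ((0:ℕ) : ZMod n))), P.IsPath →
      (∀ t : ℕ, 1 ≤ t → t ≤ j → a + (t : ZMod n) ∉ P.support) →
      ∃ P' : G.Walk (a + ((L : ℕ) : ZMod n)) (a + ((0:ℕ) : ZMod n)), P'.IsPath ∧
        P'.length + (L - 1) = P.length + j ∧
        (∀ z ∈ P'.support, z ∈ P.support) ∧
        (∀ t : ℕ, 1 ≤ t → t ≤ L - 1 → a + (t : ZMod n) ∉ P'.support) := by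
  intro k
  induction k with
  | zero =>
    intro j hj h1 P hP hint
    have hL : j + 1 = L := by omega
    subst hL
    exact ⟨P, hP, by omega, fun z hz => hz, fun t ht1 ht2 => hint t ht1 (by omega)⟩
  | succ k ih =>
    intro j hj h1 P hP hint
    have hne0 : a + ((j+1 : ℕ) : ZMod n) ≠ a + ((0:ℕ) : ZMod n) := by
      intro he
      have := cast_add_inj (a := a) (by omega) (by omega) he
      omega
    obtain ⟨z, hadj, P₂, hPeq⟩ := Walk.not_nil_iff.mp (Walk.not_nil_of_ne (p := P) hne0)
    have hz := nbr_interior ham hLn hInt (t := j+1) (by omega) (by omega) hadj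
    rw [Nat.add_sub_cancel] at hz
    have hzP : z ∈ P.support := by
      rw [hPeq, Walk.support_cons]
      exact List.mem_cons_of_mem _ P₂.start_mem_support
    rcases hz with rfl | rfl
    · exact absurd hzP (hint j h1 le_rfl)
    · have hP₂path : P₂.IsPath ∧ a + ((j+1:ℕ) : ZMod n) ∉ P₂.support := by
        have := hPeq ▸ hP
        exact ⟨(Walk.cons_isPath_iff _ _).mp this |>.1, (Walk.cons_isPath_iff _ _).mp this |>.2⟩
      have hint₂ : ∀ t : ℕ, 1 ≤ t → t ≤ j + 1 → a + (t : ZMod n) ∉ P₂.support := by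
        intro t ht1 ht2 hmem
        rcases Nat.lt_or_ge t (j+1) with hlt | hge
        · refine hint t ht1 (by omega) ?_
          rw [hPeq, Walk.support_cons]
          exact List.mem_cons_of_mem _ hmem
        · have : t = j + 1 := by omega
          subst this
          exact hP₂path.2 hmem
      obtain ⟨P', hP'path, hP'len, hP'sub, hP'int⟩ :=
        ih (j+1) (by omega) (by omega) P₂ hP₂path.1 hint₂
      have hPlen : P.length = P₂.length + 1 := by
        rw [hPeq, Walk.length_cons]
      refine ⟨P', hP'path, by omega, ?_, hP'int⟩
      intro z hz
      rw [hPeq, Walk.support_cons]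
      exact List.mem_cons_of_mem _ (hP'sub z hz)

lemma chord_cycle (ham : ∀ i : ZMod n, G.Adj i (i+1)) (hLn : L < n)
    (hInt : ∀ t : ℕ, 0 < t → t < L → (G.neighborSet (a + (t : ZMod n))).ncard = 2)
    (hL3 : 3 ≤ L) (hchord : G.Adj a (a + (L : ZMod n)))
    {x : ZMod n} {c : G.Walk x x}
    (hc : c.IsCycle) (hu : a + ((1:ℕ) : ZMod n) ∈ c.support) (hlen2 : L + 2 ≤ c.length) :
    ∃ (w : G.Walk (a + ((0:ℕ) : ZMod n)) (a + ((0:ℕ) : ZMod n))), w.IsCycle ∧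
      w.length + L = c.length + 1 ∧
      (∀ z ∈ w.support, ∀ t : ℕ, 0 < t → t < L → z ≠ a + (t : ZMod n)) := by
  classical
  obtain ⟨z₁, z₂, q, hne, h1, h2, hqp, hrq, hlen, -, -, -⟩ := cycle_split (hc.rotate hu)
  rw [length_rotate''] at hlen
  have c1 := nbr_interior ham hLn hInt (t := 1) one_pos (by omega) h1
  have c2 := nbr_interior ham hLn hInt (t := 1) one_pos (by omega) h2
  have e0 : ((1:ℕ) - 1 : ℕ) = 0 := rfl
  have e2 : ((1:ℕ) + 1 : ℕ) = 2 := rfl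
  rw [e0, e2] at c1 c2
  -- build from a path P : Walk (a+2) (a+0)
  have build : ∀ (P : G.Walk (a + ((2:ℕ) : ZMod n)) (a + ((0:ℕ) : ZMod n))),
      P.IsPath → (a + ((1:ℕ) : ZMod n)) ∉ P.support → P.length + 2 = c.length →
      ∃ (w : G.Walk (a + ((0:ℕ) : ZMod n)) (a + ((0:ℕ) : ZMod n))), w.IsCycle ∧
        w.length + L = c.length + 1 ∧
        (∀ z ∈ w.support, ∀ t : ℕ, 0 < t → t < L → z ≠ a + (t : ZMod n)) := by
    intro P hP hnu hPlen
    have hint1 : ∀ t : ℕ, 1 ≤ t → t ≤ 1 → a + (t : ZMod n) ∉ P.support := by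
      intro t ht1 ht2
      have : t = 1 := by omega
      subst this
      exact hnu
    obtain ⟨P', hP'path, hP'len, hP'sub, hP'int⟩ :=
      asc_walk ham hLn hInt (L - 2) 1 (by omega) le_rfl P hP hint1
    -- P' : Walk (a+L) (a+0), P'.length + (L-1) = P.length + 1
    have hchord0 : G.Adj (a + ((0:ℕ) : ZMod n)) (a + ((L:ℕ) : ZMod n)) := by
      simpa using hchord
    have hP'2 : 2 ≤ P'.length := by omega
    have hecl : s(a + ((0:ℕ) : ZMod n), a + ((L:ℕ) : ZMod n)) ∉ P'.edges := by
      rw [Sym2.eq_swap]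
      exact endpoint_edge_not_mem hP'path hP'2
    refine ⟨Walk.cons hchord0 P', (Walk.cons_isCycle_iff _ hchord0).mpr ⟨hP'path, hecl⟩, ?_, ?_⟩
    · rw [Walk.length_cons]
      omega
    · intro z hz t ht0 htL hzt
      rw [Walk.support_cons, List.mem_cons] at hz
      rcases hz with rfl | hz
      · have := cast_add_inj (a := a) (by omega) (by omega) hzt
        omega
      · exact hP'int t ht0 (by omega) (hzt ▸ hz)
  rcases c1 with rfl | rfl
  · rcases c2 with h' | h'
    · exact absurd h' (by intro h''; exact hne (h''.symm ▸ rfl))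
    · subst h'
      exact build q.reverse hqp.reverse
        (by rw [Walk.support_reverse, List.mem_reverse]; exact hrq)
        (by rw [Walk.length_reverse]; omega)
  · rcases c2 with h' | h'
    · subst h'
      exact build q hqp hrq (by omega)
    · exact absurd h' (by intro h''; exact hne (h''.symm ▸ rfl))

end ContractPart

section MainPart
variable {n : ℕ} [NeZero n] {G : SimpleGraph (ZMod n)} {a : ZMod n} {L : ℕ}

lemma main_pancyclic (hn6 : 6 < n) (ham : ∀ i : ZMod n, G.Adj i (i+1))
    (hpan : Pancyclic G) (hLn : L < n)
    (hInt : ∀ t : ℕ, 0 < t → t < L → (G.neighborSet (a + (t : ZMod n))).ncard = 2)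
    (hL3 : 3 ≤ L)
    (hcase : (¬ G.Adj a (a + (L : ZMod n)) ∧ n ≤ 2*L + 1) ∨
             (G.Adj a (a + (L : ZMod n)) ∧ n + 2 ≤ 3*L)) :
    ∀ k, 3 ≤ k → k ≤ n - 1 →
      HasCycleLength (contractEdge G (a + ((1:ℕ) : ZMod n)) (a + ((2:ℕ) : ZMod n))) k := by
  intro k hk3 hk
  have hpan' : ∀ j, 3 ≤ j → j ≤ n → HasCycleLength G j := by
    intro j h3 hjn
    exact hpan j h3 (by rw [ZMod.card]; exact hjn)
  by_cases hsmall : k + L ≤ n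
  · rcases hcase with ⟨hnc, h2L⟩ | ⟨hch, h3L⟩
    · obtain ⟨x, c, hc, hclen⟩ := hpan' k hk3 (by omega)
      by_cases hu : a + ((1:ℕ) : ZMod n) ∈ c.support
      · exfalso
        have := length_lb_nochord ham hLn hInt hL3 hnc hc hu
        omega
      · obtain ⟨y, w, hw, hwlen⟩ := lift_cycle (v := a + ((2:ℕ) : ZMod n)) hc
          (fun z hz he => hu (by rwa [he] at hz))
        exact ⟨y, w, hw, by omega⟩
    · rcases Nat.lt_or_ge L k with hLk | hkL
      · obtain ⟨x, c, hc, hclen⟩ := hpan' (k + L - 1) (by omega) (by omega)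
        have hu : a + ((1:ℕ) : ZMod n) ∈ c.support := by
          by_contra hu
          have := length_ub_avoid ham hLn hInt (by omega) hc hu
          omega
        obtain ⟨w, hw, hwlen, hwint⟩ := chord_cycle ham hLn hInt hL3 hch hc hu (by omega)
        have havoid : ∀ z ∈ w.support, z ≠ a + ((1:ℕ) : ZMod n) := fun z hz =>
          hwint z hz 1 one_pos (by omega)
        obtain ⟨y, w', hw', hwlen'⟩ := lift_cycle (v := a + ((2:ℕ) : ZMod n)) hw havoid
        exact ⟨y, w', hw', by omega⟩
      · obtain ⟨x, c, hc, hclen⟩ := hpan' k hk3 (by omega)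
        by_cases hu : a + ((1:ℕ) : ZMod n) ∈ c.support
        · exfalso
          have hall := u_to_arc ham hLn hInt (by omega) hc hu
          have := length_lb hLn hc hall
          omega
        · obtain ⟨y, w, hw, hwlen⟩ := lift_cycle (v := a + ((2:ℕ) : ZMod n)) hc
            (fun z hz he => hu (by rwa [he] at hz))
          exact ⟨y, w, hw, by omega⟩
  · obtain ⟨x, c, hc, hclen⟩ := hpan' (k+1) (by omega) (by omega)
    have hu : a + ((1:ℕ) : ZMod n) ∈ c.support := by
      by_contra hu
      have := length_ub_avoid ham hLn hInt (by omega) hc hu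
      omega
    obtain ⟨y, w, hw, hwlen⟩ := contract_cycle ham hLn hInt hL3 hc hu
    exact ⟨y, w, hw, by omega⟩

lemma contract_count (ham : ∀ i : ZMod n, G.Adj i (i+1)) (hLn : L < n)
    (hInt : ∀ t : ℕ, 0 < t → t < L → (G.neighborSet (a + (t : ZMod n))).ncard = 2)
    (hL3 : 3 ≤ L) :
    (contractEdge G (a + ((1:ℕ) : ZMod n)) (a + ((2:ℕ) : ZMod n))).edgeSet.ncard + 1
      = G.edgeSet.ncard := by
  classical
  have hne02 : a + ((0:ℕ) : ZMod n) ≠ a + ((2:ℕ) : ZMod n) := by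
    intro h
    have := cast_add_inj (a := a) (by omega) (by omega) h
    omega
  have hne12 : a + ((1:ℕ) : ZMod n) ≠ a + ((2:ℕ) : ZMod n) := by
    intro h
    have := cast_add_inj (a := a) (by omega) (by omega) h
    omega
  have hne10 : a + ((1:ℕ) : ZMod n) ≠ a + ((0:ℕ) : ZMod n) := by
    intro h
    have := cast_add_inj (a := a) (by omega) (by omega) h
    omega
  have hadj10 : G.Adj (a + ((1:ℕ) : ZMod n)) (a + ((0:ℕ) : ZMod n)) := by
    have h' := ham (a + ((0:ℕ) : ZMod n))
    rw [cast_succ_eq] at h'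
    exact h'.symm
  have hadj12 : G.Adj (a + ((1:ℕ) : ZMod n)) (a + ((2:ℕ) : ZMod n)) := by
    have h' := ham (a + ((1:ℕ) : ZMod n))
    rwa [cast_succ_eq] at h'
  set u := a + ((1:ℕ) : ZMod n) with hu
  set v := a + ((2:ℕ) : ZMod n) with hv
  set a0 := a + ((0:ℕ) : ZMod n) with ha0
  set f : Sym2 {z : ZMod n // z ≠ u} → Sym2 (ZMod n) := Sym2.map Subtype.val with hf
  have hfinj : Function.Injective f := Sym2.map.injective Subtype.val_injective
  have hnbr : ∀ z : ZMod n, G.Adj u z → z = a0 ∨ z = v := by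
    intro z hz
    have := nbr_interior ham hLn hInt (t := 1) one_pos (by omega) hz
    have e0 : ((1:ℕ) - 1 : ℕ) = 0 := rfl
    have e2 : ((1:ℕ) + 1 : ℕ) = 2 := rfl
    rw [e0, e2] at this
    exact this
  have key : f '' (contractEdge G u v).edgeSet =
      (G.edgeSet \ {s(u, a0), s(u, v)}) ∪ {s(a0, v)} := by
    ext e
    constructor
    · rintro ⟨e', he', rfl⟩
      induction e' using Sym2.ind with
      | _ b c =>
        obtain ⟨hbc, hcase⟩ : _ ∧ _ := he'
        rw [hf, Sym2.map_pair_eq]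
        rcases hcase with h | ⟨h1, h2⟩ | ⟨h1, h2⟩
        · left
          refine ⟨h, ?_⟩
          intro hmem
          simp only [Set.mem_insert_iff, Set.mem_singleton_iff] at hmem
          rcases hmem with hmem | hmem <;>
          · rw [Sym2.eq_iff] at hmem
            rcases hmem with ⟨hb, -⟩ | ⟨-, hc⟩
            · exact b.2 hb
            · exact c.2 hc
        · rcases hnbr _ h2 with hc0 | hc2
          · right
            simp only [Set.mem_singleton_iff]
            rw [h1, hc0, Sym2.eq_swap]
          · exact absurd (Subtype.ext (h1.trans hc2.symm)) hbc
        · rcases hnbr _ h2.symm with hb0 | hb2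
          · right
            simp only [Set.mem_singleton_iff]
            rw [h1, hb0]
          · exact absurd (Subtype.ext (hb2.trans h1.symm)) hbc
    · intro he
      rcases he with ⟨hmem, hnotin⟩ | hsing
      · induction e using Sym2.ind with
        | _ b c =>
          have hadj : G.Adj b c := hmem
          have hbu : b ≠ u := by
            rintro rfl
            apply hnotin
            rcases hnbr _ hadj with rfl | rfl
            · exact Set.mem_insert _ _
            · exact Set.mem_insert_of_mem _ rfl
          have hcu : c ≠ u := by
            rintro rfl
            apply hnotin
            rcases hnbr _ hadj.symm with rfl | rfl
            · have hsw : s(a0, u) = s(u, a0) := Sym2.eq_swap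
              rw [hsw]; exact Set.mem_insert _ _
            · have hsw : s(v, u) = s(u, v) := Sym2.eq_swap
              rw [hsw]; exact Set.mem_insert_of_mem _ rfl
          refine ⟨s(⟨b, hbu⟩, ⟨c, hcu⟩),
            (show _ ∧ _ from ⟨fun h => hadj.ne (congrArg Subtype.val h), Or.inl hadj⟩), ?_⟩
          rw [hf, Sym2.map_pair_eq]
      · rw [Set.mem_singleton_iff] at hsing
        subst hsing
        have h0u : a0 ≠ u := fun h => hne10 h.symm
        have hvu : v ≠ u := fun h => hne12 h.symm
        refine ⟨s(⟨a0, h0u⟩, ⟨v, hvu⟩),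
          (show _ ∧ _ from ⟨fun h => hne02 (congrArg Subtype.val h), Or.inr (Or.inr ⟨rfl, hadj10.symm⟩)⟩), ?_⟩
        rw [hf, Sym2.map_pair_eq]
  have hpairsub : ({s(u, a0), s(u, v)} : Set (Sym2 (ZMod n))) ⊆ G.edgeSet := by
    rintro e he
    simp only [Set.mem_insert_iff, Set.mem_singleton_iff] at he
    rcases he with rfl | rfl
    · exact hadj10
    · exact hadj12
  have hpairne : s(u, a0) ≠ s(u, v) := by
    intro h
    rw [Sym2.eq_iff] at h
    rcases h with ⟨-, h⟩ | ⟨h, -⟩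
    · exact hne02 (h ▸ rfl)
    · exact hne12 h
  have hpaircard : ({s(u, a0), s(u, v)} : Set (Sym2 (ZMod n))).ncard = 2 :=
    Set.ncard_pair hpairne
  have hsnotin : s(a0, v) ∉ G.edgeSet \ {s(u, a0), s(u, v)} := by
    intro h
    exact not_adj_a0_a2 ham hLn hInt hL3 h.1
  have h1 : (f '' (contractEdge G u v).edgeSet).ncard
      = (contractEdge G u v).edgeSet.ncard := Set.ncard_image_of_injective _ hfinj
  rw [key] at h1
  have hdisj : Disjoint (G.edgeSet \ {s(u, a0), s(u, v)}) ({s(a0, v)} : Set (Sym2 (ZMod n))) :=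
    Set.disjoint_singleton_right.mpr hsnotin
  rw [Set.ncard_union_eq hdisj (Set.toFinite _) (Set.toFinite _), Set.ncard_singleton] at h1
  rw [Set.ncard_diff hpairsub (Set.toFinite _), hpaircard] at h1
  have hle : 2 ≤ G.edgeSet.ncard := by
    have := Set.ncard_le_ncard hpairsub (Set.toFinite _)
    omega
  omega

lemma card_ne_subtype (u : ZMod n) : Fintype.card {z : ZMod n // z ≠ u} = n - 1 := by
  classical
  have h := Fintype.card_subtype_compl (fun z : ZMod n => z = u)
  rw [Fintype.card_subtype_eq, ZMod.card] at h
  exact h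

lemma transfer_bound {W : Type*} [Fintype W] {H : SimpleGraph W} {N : ℕ}
    (hcard : Fintype.card W = N)
    (hcyc : ∀ k, 3 ≤ k → k ≤ N → HasCycleLength H k) :
    m N ≤ H.edgeSet.ncard := by
  classical
  let e : W ≃ Fin N := Fintype.equivFinOfCardEq hcard
  let φ : H.comap e.symm.toEmbedding ≃g H := Iso.comap e.symm H
  have hpan : Pancyclic (H.comap e.symm.toEmbedding) := by
    intro k h3 hk
    rw [Fintype.card_fin] at hk
    obtain ⟨y, w, hw, hwl⟩ := hcyc k h3 hk
    refine ⟨φ.symm y, w.map φ.symm.toHom, ?_, by rw [Walk.length_map]; exact hwl⟩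
    exact hw.map (φ.symm.toEmbedding.injective)
  have hcount : (H.comap e.symm.toEmbedding).edgeSet.ncard = H.edgeSet.ncard := by
    have h2 := Nat.card_congr φ.mapEdgeSet
    rwa [Nat.card_coe_set_eq, Nat.card_coe_set_eq] at h2
  exact hcount ▸ Nat.sInf_le ⟨H.comap e.symm.toEmbedding, hpan, rfl⟩

end MainPart


end Aux10

/-- For `n > 6`: if some minimal pancyclic graph on `n` vertices (with the standard
Hamiltonian cycle on `ZMod n`) has an arc of length at least `(n-1)/2` with no chord
joining its endpoints, then `m (n-1) < m n`; if some minimal pancyclic graph on `n`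
vertices has an arc of length at least `(n+2)/3` whose endpoints are joined by a
chord, then `m (n-1) ≤ m n`. -/
theorem stmt_10 {n : ℕ} [NeZero n] (hn : 6 < n) :
    ((∃ (G : SimpleGraph (ZMod n)) (a : ZMod n) (L : ℕ),
        (∀ i : ZMod n, G.Adj i (i + 1)) ∧ Pancyclic G ∧ G.edgeSet.ncard = m n ∧
        IsArc G a L ∧ ¬ G.Adj a (a + (L : ZMod n)) ∧ n - 1 ≤ 2 * L) →
      m (n - 1) < m n) ∧
    ((∃ (G : SimpleGraph (ZMod n)) (a : ZMod n) (L : ℕ),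
        (∀ i : ZMod n, G.Adj i (i + 1)) ∧ Pancyclic G ∧ G.edgeSet.ncard = m n ∧
        IsArc G a L ∧ G.Adj a (a + (L : ZMod n)) ∧ n + 2 ≤ 3 * L) →
      m (n - 1) ≤ m n) := by
  constructor
  · rintro ⟨G, a, L, ham, hpan, hcount, ⟨hLn, hInt, -, -⟩, hnc, h2L⟩
    have hL3 : 3 ≤ L := by omega
    have hmain := main_pancyclic hn ham hpan hLn hInt hL3 (Or.inl ⟨hnc, by omega⟩)
    have hcnt := contract_count ham hLn hInt hL3
    have hbound := transfer_bound (card_ne_subtype (a + ((1:ℕ) : ZMod n))) hmain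
    omega
  · rintro ⟨G, a, L, ham, hpan, hcount, ⟨hLn, hInt, -, -⟩, hch, h3L⟩
    have hL3 : 3 ≤ L := by omega
    have hmain := main_pancyclic hn ham hpan hLn hInt hL3 (Or.inr ⟨hch, by omega⟩)
    have hcnt := contract_count ham hLn hInt hL3
    have hbound := transfer_bound (card_ne_subtype (a + ((1:ℕ) : ZMod n))) hmain
    omega
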